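/- Let $p_t(\alpha,\beta)$ satisfy $p_0 = 1$, $p_1 = \alpha/4$, $p_2 = (\alpha/2-\beta)^2$, and $p_t = (\alpha-\beta)p_{t-1} - \beta(\alpha-\beta)p_{t-2} + \beta^3 p_{t-3}$ for $t \geq 3$. If $0 \leq 4\beta < \alpha$, then for all $t \geq 0$, $p_t(\alpha,\beta) = \big[ \tfrac{1}{2}(\tfrac{\sqrt{\alpha}}{2} + \tfrac{\sqrt{\alpha - 4\beta}}{2})^t + \tfrac{1}{2}(\tfrac{\sqrt{\alpha}}{2} - \tfrac{\sqrt{\alpha - 4\beta}}{2})^t \big]^2$. -/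
import Mathlib


theorem stmt_6 (α β : ℝ) (hβ : 0 ≤ β) (hαβ : 4 * β < α)
    (p : ℕ → ℝ)
    (hp0 : p 0 = 1) (hp1 : p 1 = α / 4) (hp2 : p 2 = (α / 2 - β) ^ 2)
    (hprec : ∀ t, p (t + 3) =
      (α - β) * p (t + 2) - β * (α - β) * p (t + 1) + β ^ 3 * p t) :
    ∀ t, p t =
      ((1 / 2) * (Real.sqrt α / 2 + Real.sqrt (α - 4 * β) / 2) ^ t +
       (1 / 2) * (Real.sqrt α / 2 - Real.sqrt (α - 4 * β) / 2) ^ t) ^ 2 := by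
  have hα0 : (0:ℝ) ≤ α := by linarith
  have hd0 : (0:ℝ) ≤ α - 4 * β := by linarith
  have hs : Real.sqrt α ^ 2 = α := Real.sq_sqrt hα0
  have hd : Real.sqrt (α - 4 * β) ^ 2 = α - 4 * β := Real.sq_sqrt hd0
  set u := Real.sqrt α / 2 + Real.sqrt (α - 4 * β) / 2 with hu
  set v := Real.sqrt α / 2 - Real.sqrt (α - 4 * β) / 2 with hv
  have huv : u * v = β := by
    rw [hu, hv]; nlinarith [hs, hd]
  have hsum : u + v = Real.sqrt α := by rw [hu, hv]; ring
  have hα : α = (u + v) ^ 2 := by rw [hsum, hs]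
  have key : ∀ a b : ℝ,
      ((1/2) * (u^3 * a) + (1/2) * (v^3 * b)) ^ 2 =
      (α - β) * ((1/2) * (u^2 * a) + (1/2) * (v^2 * b)) ^ 2
      - β * (α - β) * ((1/2) * (u * a) + (1/2) * (v * b)) ^ 2
      + β ^ 3 * ((1/2) * a + (1/2) * b) ^ 2 := by
    intro a b
    rw [← huv, hα]; ring
  suffices h : ∀ t, p t = ((1/2) * u ^ t + (1/2) * v ^ t) ^ 2 ∧
      p (t+1) = ((1/2) * u ^ (t+1) + (1/2) * v ^ (t+1)) ^ 2 ∧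
      p (t+2) = ((1/2) * u ^ (t+2) + (1/2) * v ^ (t+2)) ^ 2 by
    intro t; exact (h t).1
  intro t
  induction t with
  | zero =>
    refine ⟨?_, ?_, ?_⟩
    · rw [hp0]; norm_num
    · rw [hp1]; rw [hu, hv]; nlinarith [hs]
    · rw [hp2]; rw [hu, hv]; nlinarith [hs, hd]
  | succ n ih =>
    obtain ⟨h1, h2, h3⟩ := ih
    refine ⟨h2, h3, ?_⟩
    have := hprec n
    rw [h1, h2, h3] at this
    rw [show n + 1 + 2 = n + 3 from rfl, this]
    have e1 : u ^ (n+3) = u ^ 3 * u ^ n := by ring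
    have e2 : v ^ (n+3) = v ^ 3 * v ^ n := by ring
    have e3 : u ^ (n+2) = u ^ 2 * u ^ n := by ring
    have e4 : v ^ (n+2) = v ^ 2 * v ^ n := by ring
    have e5 : u ^ (n+1) = u * u ^ n := by ring
    have e6 : v ^ (n+1) = v * v ^ n := by ring
    rw [e1, e2, e3, e4, e5, e6]
    exact (key (u ^ n) (v ^ n)).symm
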